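/- Define U : ℕ × ℕ → ℤ by U(i,j) = 1 if C(j,i) is odd and 0 otherwise. Let 2^{k−1} < n ≤ 2^k and 0 ≤ m < 2^{k−1}. Then det((U(i, m+j))_{0≤i,j<n}) = (−1)^{n−2^{k−1}} · det((U(i, m+2^{k−1}+j))_{0≤i,j<n}). -/

import Mathlib

def U (i j : ℕ) : ℤ := if Odd (Nat.choose j i) then 1 else 0

lemma choose_split (e a b c s : ℕ) (hc : c < 2^e) (hs : s < 2^e) :
    Nat.choose (a * 2^e + c) (b * 2^e + s) ≡ Nat.choose a b * Nat.choose c s [MOD 2] := by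
  haveI : Fact (Nat.Prime 2) := ⟨Nat.prime_two⟩
  induction e generalizing a b c s with
  | zero =>
    interval_cases c
    interval_cases s
    simp
    rfl
  | succ e ih =>
    have hP : (2:ℕ)^(e+1) = 2^e * 2 := pow_succ 2 e
    rw [hP] at hc hs
    have aux : ∀ x y : ℕ, (x * 2 + y) % 2 = y % 2 ∧ (x * 2 + y) / 2 = x + y / 2 := by
      intro x y; omega
    have h1 : (a * 2^(e+1) + c) % 2 = c % 2 := by
      rw [hP, ← mul_assoc]; exact (aux _ _).1
    have h2 : (a * 2^(e+1) + c) / 2 = a * 2^e + c / 2 := by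
      rw [hP, ← mul_assoc]; exact (aux _ _).2
    have h1' : (b * 2^(e+1) + s) % 2 = s % 2 := by
      rw [hP, ← mul_assoc]; exact (aux _ _).1
    have h2' : (b * 2^(e+1) + s) / 2 = b * 2^e + s / 2 := by
      rw [hP, ← mul_assoc]; exact (aux _ _).2
    have step := Choose.choose_modEq_choose_mod_mul_choose_div_nat
      (n := a * 2^(e+1) + c) (k := b * 2^(e+1) + s) (p := 2)
    rw [h1, h2, h1', h2'] at step
    have hc2 : c / 2 < 2^e := by omega
    have hs2 : s / 2 < 2^e := by omega
    have ih' := ih a b (c/2) (s/2) hc2 hs2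
    have step2 : Nat.choose c s ≡
        Nat.choose (c % 2) (s % 2) * Nat.choose (c / 2) (s / 2) [MOD 2] :=
      Choose.choose_modEq_choose_mod_mul_choose_div_nat
    calc Nat.choose (a * 2^(e+1) + c) (b * 2^(e+1) + s)
        ≡ Nat.choose (c % 2) (s % 2) * Nat.choose (a * 2^e + c/2) (b * 2^e + s/2) [MOD 2] := step
      _ ≡ Nat.choose (c % 2) (s % 2) * (Nat.choose a b * Nat.choose (c/2) (s/2)) [MOD 2] :=
          Nat.ModEq.mul_left _ ih'
      _ = Nat.choose a b * (Nat.choose (c % 2) (s % 2) * Nat.choose (c/2) (s/2)) := by ring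
      _ ≡ Nat.choose a b * Nat.choose c s [MOD 2] := Nat.ModEq.mul_left _ step2.symm

lemma odd_choose_split (e a b c s : ℕ) (hc : c < 2^e) (hs : s < 2^e) :
    Odd (Nat.choose (a * 2^e + c) (b * 2^e + s)) ↔
      Odd (Nat.choose a b) ∧ Odd (Nat.choose c s) := by
  have h := choose_split e a b c s hc hs
  rw [Nat.ModEq] at h
  rw [Nat.odd_iff, h, ← Nat.odd_iff, Nat.odd_mul]

lemma U_split (e d i c : ℕ) (hc : c < 2^e) :
    U i (d * 2^e + c) = U (i / 2^e) d * U (i % 2^e) c := by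
  have him : i % 2^e < 2^e := Nat.mod_lt _ (Nat.pow_pos (n := e) (by norm_num))
  unfold U
  rw [show Nat.choose (d * 2^e + c) i
      = Nat.choose (d * 2^e + c) ((i / 2^e) * 2^e + i % 2^e) from by
    rw [Nat.div_add_mod']]
  simp only [odd_choose_split e d (i / 2^e) c (i % 2^e) hc him]
  by_cases h1 : Odd (Nat.choose d (i / 2^e)) <;>
    by_cases h2 : Odd (Nat.choose c (i % 2^e)) <;> simp [h1, h2]

lemma U_zero_left (d : ℕ) : U 0 d = 1 := by simp [U]

lemma U_one_left (d : ℕ) : U 1 d = if Odd d then 1 else 0 := by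
  simp [U, Nat.choose_one_right]

theorem case_small (k n m : ℕ) (hk : 1 ≤ k)
    (hn1 : 2 ^ (k - 1) < n) (hn2 : n ≤ 2 ^ k) (hm : m < 2 ^ (k - 1)) :
    (Matrix.of fun i j : Fin n => U i (m + j)).det =
      (-1 : ℤ) ^ (n - 2 ^ (k - 1)) *
        (Matrix.of fun i j : Fin n => U i (m + 2 ^ (k - 1) + j)).det := by
  set N := 2 ^ (k - 1) with hN
  have hn2' : n ≤ 2 * N := by
    have h2k : 2 ^ k = 2 * N := by
      rw [hN, ← pow_succ']
      congr 1
      omega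
    omega
  have hNpos : 0 < N := Nat.pow_pos (by norm_num)
  set A : Matrix (Fin n) (Fin n) ℤ := Matrix.of fun i j : Fin n => U i (m + j) with hA
  set B : Matrix (Fin n) (Fin n) ℤ := Matrix.of fun i j : Fin n => U i (m + N + j) with hB
  set M : Matrix (Fin n) (Fin n) ℤ := fun i l =>
    if (i : ℕ) < N then (if l = i then 1 else 0)
    else (if l = i then -1 else if (l : ℕ) + N = (i : ℕ) then 1 else 0) with hM
  -- entry formulas
  have entry : ∀ (i : Fin n) (j : Fin n),
      (if (i:ℕ) < N then B i j = A i j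
       else B i j = A ⟨(i:ℕ) - N, by omega⟩ j - A i j) := by
    intro i j
    have hd : m + (j:ℕ) = ((m + j) / N) * N + (m + j) % N := (Nat.div_add_mod' _ _).symm
    set d := (m + (j:ℕ)) / N with hdd
    set c := (m + (j:ℕ)) % N with hcc
    have hc : c < N := Nat.mod_lt _ hNpos
    have hAij : A i j = U ((i:ℕ) / N) d * U ((i:ℕ) % N) c := by
      rw [hA]
      simp only [Matrix.of_apply]
      rw [hd, hN, U_split (k-1) d i c (hN ▸ hc)]
    have hd' : m + N + (j:ℕ) = (d + 1) * N + c := by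
      have hdN : (d + 1) * N = d * N + N := by ring
      omega
    have hBij : B i j = U ((i:ℕ) / N) (d + 1) * U ((i:ℕ) % N) c := by
      rw [hB]
      simp only [Matrix.of_apply]
      rw [hd', hN, U_split (k-1) (d+1) i c (hN ▸ hc)]
    by_cases hi : (i:ℕ) < N
    · simp only [hi, if_true]
      rw [hAij, hBij, Nat.div_eq_of_lt hi, U_zero_left, U_zero_left]
    · simp only [hi, if_false]
      push_neg at hi
      have hi2 : (i:ℕ) < 2 * N := by omega
      have hdiv : (i:ℕ) / N = 1 := Nat.div_eq_of_lt_le (by omega) (by omega)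
      have hmod : (i:ℕ) % N = (i:ℕ) - N := by
        rw [Nat.mod_eq_sub_mod hi, Nat.mod_eq_of_lt (by omega)]
      have hA'ij : A ⟨(i:ℕ) - N, by omega⟩ j = U ((i:ℕ) - N) c := by
        rw [hA]
        simp only [Matrix.of_apply]
        rw [hd, hN, U_split (k-1) d _ c (hN ▸ hc), ← hN, Nat.div_eq_of_lt (by omega),
          Nat.mod_eq_of_lt (by omega), U_zero_left, one_mul]
      rw [hAij, hBij, hdiv, hmod, hA'ij, U_one_left, U_one_left]
      rcases Nat.even_or_odd d with he | ho
      · have h1 : ¬ Odd d := Nat.not_odd_iff_even.mpr he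
        have h2 : Odd (d + 1) := he.add_one
        rw [if_pos h2, if_neg h1]
        ring
      · have h1 : Odd d := ho
        have h2 : ¬ Odd (d + 1) := Nat.not_odd_iff_even.mpr ho.add_one
        rw [if_neg h2, if_pos h1]
        ring
  -- B = M * A
  have hBMA : B = M * A := by
    ext i j
    rw [Matrix.mul_apply]
    by_cases hi : (i:ℕ) < N
    · have hBA := entry i j
      rw [if_pos hi] at hBA
      rw [hBA]
      rw [Finset.sum_eq_single i]
      · simp [hM, hi]
      · intro l _ hl
        simp [hM, hi, hl]
      · simp
    · have hBA := entry i j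
      rw [if_neg (not_lt.mpr (le_of_not_gt hi))] at hBA
      push_neg at hi
      set i' : Fin n := ⟨(i:ℕ) - N, by omega⟩ with hi'
      have hi'v : (i':ℕ) = (i:ℕ) - N := rfl
      have hii' : i' ≠ i := by
        intro h
        have : (i':ℕ) = (i:ℕ) := by rw [h]
        omega
      have hMi : ∀ l, M i l = -(if l = i then 1 else 0) + (if l = i' then 1 else 0) := by
        intro l
        by_cases h1 : l = i
        · rw [h1]
          simp [hM, not_lt.mpr hi, Ne.symm hii']
        · by_cases h2 : l = i'
          · have hlv : (l:ℕ) + N = (i:ℕ) := by rw [h2]; omega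
            have hcanc : (i:ℕ) - N + N = (i:ℕ) := by omega
            simp [hM, not_lt.mpr hi, h1, h2, hlv, hii', hcanc, hi'v]
          · have hlv : ¬((l:ℕ) + N = (i:ℕ)) := by
              intro h
              exact h2 (Fin.ext (by omega))
            simp [hM, not_lt.mpr hi, h1, h2, hlv]
      have hsum : ∑ l, M i l * A l j = -A i j + A i' j := by
        simp only [hMi, add_mul, neg_mul, ite_mul, one_mul, zero_mul]
        rw [Finset.sum_add_distrib, Finset.sum_neg_distrib,
          Finset.sum_ite_eq' Finset.univ i, Finset.sum_ite_eq' Finset.univ i']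
        simp
      rw [hsum, hBA]
      ring
  -- det M
  have hMlt : M.BlockTriangular OrderDual.toDual := by
    intro i l h
    have hli : (i:ℕ) < (l:ℕ) := h
    by_cases hi : (i:ℕ) < N
    · simp [hM, hi, Fin.ne_of_val_ne (by omega : (l:ℕ) ≠ (i:ℕ))]
    · have h1 : l ≠ i := Fin.ne_of_val_ne (by omega)
      have h2 : ¬ ((l:ℕ) + N = (i:ℕ)) := by omega
      simp [hM, hi, h1, h2]
  have hdetM : M.det = (-1 : ℤ) ^ (n - N) := by
    rw [Matrix.det_of_lowerTriangular M hMlt]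
    have hdiag : ∀ i : Fin n, M i i = if (i:ℕ) < N then (1:ℤ) else -1 := by
      intro i
      by_cases hi : (i:ℕ) < N <;> simp [hM, hi]
    rw [Finset.prod_congr rfl (fun i _ => hdiag i), Finset.prod_ite, Finset.prod_const,
      Finset.prod_const, one_pow, one_mul]
    congr 1
    have hfeq : (Finset.univ.filter fun i : Fin n => (i:ℕ) < N)
        = Finset.Iio (⟨N, by omega⟩ : Fin n) := by
      ext i
      simp [Finset.mem_Iio, Fin.lt_def]
    have hcard : (Finset.univ.filter fun i : Fin n => (i:ℕ) < N).card = N := by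
      rw [hfeq, Fin.card_Iio]
    have hnot : (Finset.univ.filter fun i : Fin n => ¬ (i:ℕ) < N).card
        = n - (Finset.univ.filter fun i : Fin n => (i:ℕ) < N).card := by
      rw [Finset.filter_not, Finset.card_sdiff_of_subset (Finset.filter_subset _ _)]
      simp
    rw [hnot, hcard]
  have hdetB : B.det = (-1:ℤ) ^ (n - N) * A.det := by
    rw [hBMA, Matrix.det_mul, hdetM]
  rw [hdetB, ← mul_assoc, ← pow_add]
  have hev : Even ((n - N) + (n - N)) := ⟨n - N, rfl⟩
  rw [hev.neg_one_pow, one_mul]
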